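/- A net of quadrics Λ in the variables a,b,c,d,e is ρ3-unstable, where ρ3=(3,3,-2,-2,-2), if and only if at least one of the following holds: (a) Λ ⊆ (c,d,e) and Λ ∩ (c,d,e)² ≠ 0 (every element of the net vanishes on the line c=d=e=0 and some element is singular along this line); or (b) dim(Λ ∩ (c,d,e)²) ≥ 2 (a pencil of Λ is singular along the line c=d=e=0). -/

import Mathlib

open MvPolynomial

/-- The space of polynomials in the five variables `a,b,c,d,e` (indexed `0,…,4`). -/
abbrev Quin : Type := MvPolynomial (Fin 5) ℂ

/-- `m` is (the exponent vector of) a quadratic monomial. -/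
def QuadMon (m : Fin 5 →₀ ℕ) : Prop := (m.sum fun _ n => n) = 2

/-- A net of quadrics: a 3-dimensional space of quadratic forms. -/
def IsNet (Λ : Submodule ℂ Quin) : Prop :=
  Module.finrank ℂ Λ = 3 ∧ ∀ Q ∈ Λ, MvPolynomial.IsHomogeneous Q 2

/-- The `ρ`-weight of a monomial. -/
def wt (ρ : Fin 5 → ℤ) (m : Fin 5 →₀ ℕ) : ℤ := ∑ i, (m i : ℤ) * ρ i

/-- `Λ` is semistable with respect to the weight vector `ρ`: there are three distinct
quadratic monomials with total `ρ`-weight `≥ 0` such that the corresponding coefficient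
map `Λ → ℂ³` is bijective. -/
def SemistableWrt (Λ : Submodule ℂ Quin) (ρ : Fin 5 → ℤ) : Prop :=
  ∃ m1 m2 m3 : Fin 5 →₀ ℕ, m1 ≠ m2 ∧ m1 ≠ m3 ∧ m2 ≠ m3 ∧
    QuadMon m1 ∧ QuadMon m2 ∧ QuadMon m3 ∧
    0 ≤ wt ρ m1 + wt ρ m2 + wt ρ m3 ∧
    Function.Bijective (fun Q : Λ =>
      (![MvPolynomial.coeff m1 (Q : Quin), MvPolynomial.coeff m2 (Q : Quin),
         MvPolynomial.coeff m3 (Q : Quin)] : Fin 3 → ℂ))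

/-- The twelve distinguished weight vectors `ρ1,…,ρ12`. -/
def rho : Fin 12 → Fin 5 → ℤ :=
  ![![1,1,1,1,-4], ![2,2,2,-3,-3], ![3,3,-2,-2,-2], ![4,-1,-1,-1,-1],
    ![3,3,3,-2,-7], ![4,4,-1,-1,-6], ![9,4,-1,-6,-6], ![7,2,2,-3,-8],
    ![12,7,2,-8,-13], ![9,4,-1,-1,-11], ![14,4,-1,-6,-11], ![13,8,3,-7,-17]]

/-- A normalized weight vector: nonincreasing, sums to zero and not identically zero. -/
def IsNormalized (ρ : Fin 5 → ℤ) : Prop :=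
  (∀ i j : Fin 5, i ≤ j → ρ j ≤ ρ i) ∧ (∑ i, ρ i) = 0 ∧ ρ ≠ 0

/-- Linear substitution of variables by the matrix `g`, as a linear map on polynomials. -/
noncomputable def substMap (g : Matrix (Fin 5) (Fin 5) ℂ) : Quin →ₗ[ℂ] Quin :=
  (MvPolynomial.aeval fun i => ∑ j, MvPolynomial.C (g i j) * MvPolynomial.X j).toLinearMap

/-- Semistability of a net (Hilbert–Mumford criterion for `SL(5)`). -/
def Semistable (Λ : Submodule ℂ Quin) : Prop :=
  ∀ (g : Matrix.GeneralLinearGroup (Fin 5) ℂ) (ρ : Fin 5 → ℤ), IsNormalized ρ →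
    SemistableWrt (Submodule.map (substMap (g : Matrix (Fin 5) (Fin 5) ℂ)) Λ) ρ

/-- The symmetric matrix of a quadratic form. -/
noncomputable def quadMatrix (Q : Quin) : Matrix (Fin 5) (Fin 5) ℂ :=
  Matrix.of fun i j =>
    if i = j then MvPolynomial.coeff (Finsupp.single i 2) Q
    else (1/2) * MvPolynomial.coeff (Finsupp.single i 1 + Finsupp.single j 1) Q

/-- The discriminant quintic `det (x·A1 + y·A2 + z·A3)` of a net with basis `Q1,Q2,Q3`. -/
noncomputable def netDisc (Q1 Q2 Q3 : Quin) : MvPolynomial (Fin 3) ℂ :=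
  Matrix.det (Matrix.of fun i j : Fin 5 =>
    MvPolynomial.C (quadMatrix Q1 i j) * MvPolynomial.X 0 +
    MvPolynomial.C (quadMatrix Q2 i j) * MvPolynomial.X 1 +
    MvPolynomial.C (quadMatrix Q3 i j) * MvPolynomial.X 2)

/-- The net lies on a smooth quartic del Pezzo surface. -/
def OnSmoothDelPezzo (Λ : Submodule ℂ Quin) : Prop :=
  ∃ P1 P2 : Quin, P1 ∈ Λ ∧ P2 ∈ Λ ∧ LinearIndependent ℂ ![P1, P2] ∧
    ∀ v : Fin 5 → ℂ, v ≠ 0 → MvPolynomial.eval v P1 = 0 → MvPolynomial.eval v P2 = 0 →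
      LinearIndependent ℂ
        ![fun i => MvPolynomial.eval v (MvPolynomial.pderiv i P1),
          fun i => MvPolynomial.eval v (MvPolynomial.pderiv i P2)]

/-- The span of the quadratic monomials whose exponent vectors satisfy `P`. -/
noncomputable def monSpan (P : (Fin 5 →₀ ℕ) → Prop) : Submodule ℂ Quin :=
  Submodule.span ℂ {Q : Quin | ∃ m : Fin 5 →₀ ℕ, QuadMon m ∧ P m ∧ Q = MvPolynomial.monomial m 1}

/-- `(c,d,e)`: span of the quadratic monomials divisible by `c`, `d` or `e`. -/
noncomputable def idealCDE : Submodule ℂ Quin := monSpan fun m => m 2 ≠ 0 ∨ m 3 ≠ 0 ∨ m 4 ≠ 0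

/-- `(c,d,e)² = span{c², cd, ce, d², de, e²}`. -/
noncomputable def sqCDE : Submodule ℂ Quin := monSpan fun m => m 0 = 0 ∧ m 1 = 0

section Rho3AuxSec
open Module
-- ==================== auxiliary lemmas ====================
section Rho3Aux

open LinearMap

/-- coefficient functional on a submodule -/
noncomputable def cf (Λ : Submodule ℂ Quin) (m : Fin 5 →₀ ℕ) : ↥Λ →ₗ[ℂ] ℂ :=
  (MvPolynomial.lcoeff ℂ m).comp Λ.subtype

@[simp] lemma cf_apply (Λ : Submodule ℂ Quin) (m : Fin 5 →₀ ℕ) (Q : ↥Λ) :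
    cf Λ m Q = MvPolynomial.coeff m (Q : Quin) := rfl

lemma quadMon_sum {m : Fin 5 →₀ ℕ} (h : QuadMon m) :
    m 0 + m 1 + m 2 + m 3 + m 4 = 2 := by
  have h2 := h
  unfold QuadMon at h2
  rw [Finsupp.sum_fintype _ _ (fun _ => rfl)] at h2
  simpa [Fin.sum_univ_five] using h2

lemma quadMon_of_homog {Q : Quin} (hQ : Q.IsHomogeneous 2) {m}
    (hm : MvPolynomial.coeff m Q ≠ 0) : QuadMon m := by
  have h := hQ hm
  unfold QuadMon
  simpa [Finsupp.weight_apply, smul_eq_mul] using h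

lemma wt_rho2 {m} (hm : QuadMon m) : wt (rho 2) m = 5 * ((m 0 : ℤ) + m 1) - 4 := by
  have h5 := quadMon_sum hm
  have h : wt (rho 2) m = (m 0 : ℤ) * 3 + m 1 * 3 + m 2 * (-2) + m 3 * (-2) + m 4 * (-2) := by
    rw [wt, Fin.sum_univ_five]
    norm_num [show rho 2 0 = 3 from rfl, show rho 2 1 = 3 from rfl,
      show rho 2 2 = -2 from rfl, show rho 2 3 = -2 from rfl, show rho 2 4 = -2 from rfl]
  rw [h]; omega

lemma coeff_eq_zero_of_mem_monSpan {P : (Fin 5 →₀ ℕ) → Prop} {Q : Quin}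
    (hQ : Q ∈ monSpan P) (m : Fin 5 →₀ ℕ) (hm : ¬ P m) :
    MvPolynomial.coeff m Q = 0 := by
  have hle : monSpan P ≤ LinearMap.ker (MvPolynomial.lcoeff ℂ m) := by
    rw [monSpan, Submodule.span_le]
    rintro _ ⟨m', hq', hp', rfl⟩
    simp only [SetLike.mem_coe, LinearMap.mem_ker, MvPolynomial.lcoeff_apply,
      MvPolynomial.coeff_monomial]
    rw [if_neg]
    rintro rfl
    exact hm hp'
  simpa using hle hQ

lemma mem_monSpan {P : (Fin 5 →₀ ℕ) → Prop} {Q : Quin} (hQ : Q.IsHomogeneous 2)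
    (h : ∀ m, MvPolynomial.coeff m Q ≠ 0 → P m) : Q ∈ monSpan P := by
  rw [← Q.support_sum_monomial_coeff]
  refine Submodule.sum_mem _ fun m hm => ?_
  have hc : MvPolynomial.coeff m Q ≠ 0 := MvPolynomial.mem_support_iff.mp hm
  have he : (MvPolynomial.monomial m) (MvPolynomial.coeff m Q)
      = MvPolynomial.coeff m Q • (MvPolynomial.monomial m) 1 := by
    rw [MvPolynomial.smul_monomial, smul_eq_mul, mul_one]
  rw [he]
  exact Submodule.smul_mem _ _
    (Submodule.subset_span ⟨m, quadMon_of_homog hQ hc, h m hc, rfl⟩)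

lemma coeff_sq_eq_zero {q : Quin} (hq : q ∈ sqCDE) {m : Fin 5 →₀ ℕ}
    (hm : m 0 ≠ 0 ∨ m 1 ≠ 0) : MvPolynomial.coeff m q = 0 := by
  refine coeff_eq_zero_of_mem_monSpan hq m ?_
  rintro ⟨h0, h1⟩
  rcases hm with h | h
  · exact h h0
  · exact h h1

lemma coeff_ideal_eq_zero {q : Quin} (hq : q ∈ idealCDE) {m : Fin 5 →₀ ℕ}
    (h2 : m 2 = 0) (h3 : m 3 = 0) (h4 : m 4 = 0) : MvPolynomial.coeff m q = 0 := by
  refine coeff_eq_zero_of_mem_monSpan hq m ?_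
  simp [h2, h3, h4]

lemma finrank_inf_ker {V : Type*} [AddCommGroup V] [Module ℂ V] [FiniteDimensional ℂ V]
    (K : Submodule ℂ V) (f : V →ₗ[ℂ] ℂ) {x : V} (hx : x ∈ K) (hfx : f x ≠ 0) :
    finrank ℂ ↥(K ⊓ LinearMap.ker f) + 1 = finrank ℂ ↥K := by
  set g := f.domRestrict K with hg
  have hrange : finrank ℂ ↥(LinearMap.range g) = 1 := by
    have hle : finrank ℂ ↥(LinearMap.range g) ≤ 1 := by
      simpa using Submodule.finrank_le (LinearMap.range g)
    have hne : LinearMap.range g ≠ ⊥ := by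
      intro hbot
      have hmem : f x ∈ LinearMap.range g := ⟨⟨x, hx⟩, rfl⟩
      rw [hbot, Submodule.mem_bot] at hmem
      exact hfx hmem
    have hpos : 0 < finrank ℂ ↥(LinearMap.range g) := by
      rcases Submodule.ne_bot_iff _ |>.mp hne with ⟨y, hy, hy0⟩
      exact Module.finrank_pos_iff.mpr ⟨⟨⟨y, hy⟩, 0, by simpa using hy0⟩⟩
    omega
  have hrn := LinearMap.finrank_range_add_finrank_ker g
  have hker : finrank ℂ ↥(LinearMap.ker g) = finrank ℂ ↥(K ⊓ LinearMap.ker f) := by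
    rw [hg, LinearMap.ker_domRestrict]
    rw [← Submodule.map_comap_subtype K (LinearMap.ker f)]
    exact (Submodule.equivMapOfInjective K.subtype K.injective_subtype _).finrank_eq
  rw [hrange, hker] at hrn
  omega

lemma bij_triple {Λ : Submodule ℂ Quin} (h3 : finrank ℂ ↥Λ = 3)
    (m1 m2 m3 : Fin 5 →₀ ℕ)
    (h : ∀ x : ↥Λ, MvPolynomial.coeff m1 (x : Quin) = 0 →
      MvPolynomial.coeff m2 (x : Quin) = 0 → MvPolynomial.coeff m3 (x : Quin) = 0 → x = 0) :
    Function.Bijective (fun Q : Λ =>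
      (![MvPolynomial.coeff m1 (Q : Quin), MvPolynomial.coeff m2 (Q : Quin),
         MvPolynomial.coeff m3 (Q : Quin)] : Fin 3 → ℂ)) := by
  haveI : FiniteDimensional ℂ ↥Λ := .of_finrank_pos (by omega)
  set L : ↥Λ →ₗ[ℂ] (Fin 3 → ℂ) :=
    LinearMap.pi ![cf Λ m1, cf Λ m2, cf Λ m3] with hL
  have hfun : (fun Q : Λ =>
      (![MvPolynomial.coeff m1 (Q : Quin), MvPolynomial.coeff m2 (Q : Quin),
         MvPolynomial.coeff m3 (Q : Quin)] : Fin 3 → ℂ)) = ⇑L := by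
    funext Q
    funext i
    fin_cases i <;> simp [hL, LinearMap.pi_apply]
  rw [hfun]
  have hinj : Function.Injective L := by
    rw [← LinearMap.ker_eq_bot, Submodule.eq_bot_iff]
    intro x hx
    rw [LinearMap.mem_ker] at hx
    have e0 := congrFun hx 0
    have e1 := congrFun hx 1
    have e2 := congrFun hx 2
    simp [hL, LinearMap.pi_apply] at e0 e1 e2
    exact h x e0 e1 e2
  refine ⟨hinj, ?_⟩
  have heq : finrank ℂ ↥Λ = finrank ℂ (Fin 3 → ℂ) := by
    rw [h3]; simp
  exact (LinearMap.injective_iff_surjective_of_finrank_eq_finrank heq).mp hinj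

lemma not_bij_of_kernel {Λ : Submodule ℂ Quin} {m1 m2 m3 : Fin 5 →₀ ℕ} {q : Quin}
    (hqΛ : q ∈ Λ) (hq0 : q ≠ 0) (h1 : MvPolynomial.coeff m1 q = 0)
    (h2 : MvPolynomial.coeff m2 q = 0) (h3 : MvPolynomial.coeff m3 q = 0) :
    ¬ Function.Bijective (fun Q : Λ =>
      (![MvPolynomial.coeff m1 (Q : Quin), MvPolynomial.coeff m2 (Q : Quin),
         MvPolynomial.coeff m3 (Q : Quin)] : Fin 3 → ℂ)) := by
  intro hb
  have heq : (⟨q, hqΛ⟩ : ↥Λ) = (0 : ↥Λ) := by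
    apply hb.1
    funext i
    fin_cases i <;> simp [h1, h2, h3]
  exact hq0 (by simpa using congrArg Subtype.val heq)

lemma exists_ker_elt {N : Submodule ℂ Quin} [FiniteDimensional ℂ ↥N]
    (h2 : 2 ≤ finrank ℂ ↥N) (m : Fin 5 →₀ ℕ) :
    ∃ q ∈ N, q ≠ 0 ∧ MvPolynomial.coeff m q = 0 := by
  by_contra hcon
  push_neg at hcon
  have hinj : Function.Injective ((MvPolynomial.lcoeff ℂ m).domRestrict N) := by
    rw [LinearMap.injective_domRestrict_iff, disjoint_iff, Submodule.eq_bot_iff]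
    intro q hq
    rcases Submodule.mem_inf.mp hq with ⟨hqN, hqk⟩
    by_contra hq0
    exact (hcon q hqN hq0) hqk
  have hle := LinearMap.finrank_le_finrank_of_injective hinj
  rw [Module.finrank_self] at hle
  exact absurd (h2.trans hle) (by norm_num)

lemma eq_smul_of_finrank_le_one {N : Submodule ℂ Quin} [FiniteDimensional ℂ ↥N]
    (h1 : finrank ℂ ↥N ≤ 1) {q y : Quin} (hq : q ∈ N) (hq0 : q ≠ 0) (hy : y ∈ N) :
    ∃ c : ℂ, y = c • q := by
  obtain ⟨v, hv⟩ := finrank_le_one_iff.mp h1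
  obtain ⟨b, hb⟩ := hv ⟨q, hq⟩
  obtain ⟨a, ha⟩ := hv ⟨y, hy⟩
  have hb0 : b ≠ 0 := by
    rintro rfl
    apply hq0
    have := congrArg Subtype.val hb
    simpa using this.symm
  refine ⟨a / b, ?_⟩
  have hbq : b • (v : Quin) = q := by simpa using congrArg Subtype.val hb
  have hay : a • (v : Quin) = y := by simpa using congrArg Subtype.val ha
  rw [← hay, ← hbq, smul_smul]
  congr 1
  field_simp


/-- Key existence: nonzero elements of a net not meeting `sqCDE` have a coefficient at
a monomial involving `a` or `b`. -/
lemma exists_high_coeff {Λ : Submodule ℂ Quin} (hhom : ∀ Q ∈ Λ, MvPolynomial.IsHomogeneous Q 2)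
    {x : Quin} (hxΛ : x ∈ Λ) (hnotsq : x ∉ sqCDE) :
    ∃ m, QuadMon m ∧ 1 ≤ m 0 + m 1 ∧ MvPolynomial.coeff m x ≠ 0 := by
  by_contra hcon
  push_neg at hcon
  apply hnotsq
  refine mem_monSpan (hhom x hxΛ) fun m hm => ?_
  have hq := quadMon_of_homog (hhom x hxΛ) hm
  rcases Nat.eq_zero_or_pos (m 0 + m 1) with h | h
  · omega
  · exact absurd (hcon m hq h) hm

lemma ne_bot_of_finrank_succ {V : Type*} [AddCommGroup V] [Module ℂ V]
    {K : Submodule ℂ V} {n : ℕ} (h : finrank ℂ ↥K = n + 1) : ∃ x ∈ K, x ≠ 0 := by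
  rw [← Submodule.ne_bot_iff]
  intro hbot
  rw [hbot] at h
  simp at h

lemma semistable_of_disjoint {Λ : Submodule ℂ Quin} (hΛ : IsNet Λ)
    (hbot : Λ ⊓ sqCDE = ⊥) : SemistableWrt Λ (rho 2) := by
  obtain ⟨h3, hhom⟩ := hΛ
  haveI : FiniteDimensional ℂ ↥Λ := .of_finrank_pos (by omega)
  have key : ∀ x : ↥Λ, x ≠ 0 →
      ∃ m, QuadMon m ∧ 1 ≤ m 0 + m 1 ∧ MvPolynomial.coeff m (x : Quin) ≠ 0 := by
    intro x hx
    refine exists_high_coeff hhom x.2 fun hsq => ?_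
    have : (x : Quin) ∈ Λ ⊓ sqCDE := Submodule.mem_inf.mpr ⟨x.2, hsq⟩
    rw [hbot, Submodule.mem_bot] at this
    exact hx (by exact_mod_cast Subtype.ext this)
  have hT : finrank ℂ (⊤ : Submodule ℂ ↥Λ) = 2 + 1 := by rw [finrank_top]; omega
  obtain ⟨x1, -, hx1⟩ := ne_bot_of_finrank_succ hT
  obtain ⟨ma, hma, hma1, hca⟩ := key x1 hx1
  have hK1 : finrank ℂ ↥((⊤ : Submodule ℂ ↥Λ) ⊓ LinearMap.ker (cf Λ ma)) + 1 = 2 + 1 := by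
    rw [finrank_inf_ker ⊤ (cf Λ ma) (Submodule.mem_top) (by simpa using hca)]; exact hT
  obtain ⟨x2, hx2K, hx2⟩ := ne_bot_of_finrank_succ
    (K := (⊤ : Submodule ℂ ↥Λ) ⊓ LinearMap.ker (cf Λ ma)) (n := 1) (by omega)
  obtain ⟨mb, hmb, hmb1, hcb⟩ := key x2 hx2
  have hK2 : finrank ℂ ↥(((⊤ : Submodule ℂ ↥Λ) ⊓ LinearMap.ker (cf Λ ma))
      ⊓ LinearMap.ker (cf Λ mb)) + 1 = 1 + 1 := by
    rw [finrank_inf_ker _ (cf Λ mb) hx2K (by simpa using hcb)]; omega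
  obtain ⟨x3, hx3K, hx3⟩ := ne_bot_of_finrank_succ
    (K := ((⊤ : Submodule ℂ ↥Λ) ⊓ LinearMap.ker (cf Λ ma)) ⊓ LinearMap.ker (cf Λ mb))
    (n := 0) (by omega)
  obtain ⟨mc, hmc, hmc1, hcc⟩ := key x3 hx3
  have hK3 : finrank ℂ ↥((((⊤ : Submodule ℂ ↥Λ) ⊓ LinearMap.ker (cf Λ ma))
      ⊓ LinearMap.ker (cf Λ mb)) ⊓ LinearMap.ker (cf Λ mc)) + 1 = 0 + 1 := by
    rw [finrank_inf_ker _ (cf Λ mc) hx3K (by simpa using hcc)]; omega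
  have hbot3 : (((⊤ : Submodule ℂ ↥Λ) ⊓ LinearMap.ker (cf Λ ma))
      ⊓ LinearMap.ker (cf Λ mb)) ⊓ LinearMap.ker (cf Λ mc) = ⊥ :=
    Submodule.finrank_eq_zero.mp (by omega)
  have hx2a : MvPolynomial.coeff ma (x2 : Quin) = 0 := by
    have := (Submodule.mem_inf.mp hx2K).2
    simpa using this
  have hx3m := Submodule.mem_inf.mp hx3K
  have hx3a : MvPolynomial.coeff ma (x3 : Quin) = 0 := by
    have := (Submodule.mem_inf.mp hx3m.1).2
    simpa using this
  have hx3b : MvPolynomial.coeff mb (x3 : Quin) = 0 := by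
    have := hx3m.2
    simpa using this
  refine ⟨ma, mb, mc, ?_, ?_, ?_, hma, hmb, hmc, ?_, ?_⟩
  · rintro rfl; exact hcb hx2a
  · rintro rfl; exact hcc hx3a
  · rintro rfl; exact hcc hx3b
  · rw [wt_rho2 hma, wt_rho2 hmb, wt_rho2 hmc]; omega
  · refine bij_triple h3 ma mb mc fun x e1 e2 e3 => ?_
    have : x ∈ (((⊤ : Submodule ℂ ↥Λ) ⊓ LinearMap.ker (cf Λ ma))
        ⊓ LinearMap.ker (cf Λ mb)) ⊓ LinearMap.ker (cf Λ mc) := by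
      refine Submodule.mem_inf.mpr ⟨Submodule.mem_inf.mpr
        ⟨Submodule.mem_inf.mpr ⟨Submodule.mem_top, ?_⟩, ?_⟩, ?_⟩ <;>
        simpa using ‹_›
    rw [hbot3, Submodule.mem_bot] at this
    exact this

lemma semistable_of_not_le {Λ : Submodule ℂ Quin} (hΛ : IsNet Λ)
    (hfin1 : finrank ℂ ↥(Λ ⊓ sqCDE) ≤ 1) (hnsub : ¬ Λ ≤ idealCDE)
    {q : Quin} (hqN : q ∈ Λ ⊓ sqCDE) (hq0 : q ≠ 0) : SemistableWrt Λ (rho 2) := by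
  obtain ⟨h3, hhom⟩ := hΛ
  haveI : FiniteDimensional ℂ ↥Λ := .of_finrank_pos (by omega)
  haveI : FiniteDimensional ℂ ↥(Λ ⊓ sqCDE) :=
    Submodule.finiteDimensional_of_le (inf_le_left : Λ ⊓ sqCDE ≤ Λ)
  obtain ⟨hqΛ, hqsq⟩ := Submodule.mem_inf.mp hqN
  -- the monomial of weight 6
  rw [SetLike.le_def] at hnsub
  push_neg at hnsub
  obtain ⟨Q0, hQ0Λ, hQ0n⟩ := hnsub
  have h6 : ∃ m, QuadMon m ∧ m 0 + m 1 = 2 ∧ MvPolynomial.coeff m Q0 ≠ 0 := by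
    by_contra hcon
    push_neg at hcon
    apply hQ0n
    refine mem_monSpan (hhom Q0 hQ0Λ) fun m hm => ?_
    have hqm := quadMon_of_homog (hhom Q0 hQ0Λ) hm
    have hs := quadMon_sum hqm
    by_contra hP
    push_neg at hP
    exact hm (hcon m hqm (by omega))
  obtain ⟨m6, hqm6, hA6, hc6⟩ := h6
  -- the monomial of weight -4
  obtain ⟨m4, hc4⟩ := MvPolynomial.ne_zero_iff.mp hq0
  have hA4 : m4 0 = 0 ∧ m4 1 = 0 := by
    by_contra hcon
    refine hc4 (coeff_sq_eq_zero hqsq ?_)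
    omega
  have hqm4 : QuadMon m4 := quadMon_of_homog (hhom q hqΛ) hc4
  -- the chain
  have hT : finrank ℂ (⊤ : Submodule ℂ ↥Λ) = 2 + 1 := by rw [finrank_top]; omega
  have hK1 : finrank ℂ ↥((⊤ : Submodule ℂ ↥Λ) ⊓ LinearMap.ker (cf Λ m6)) + 1 = 2 + 1 := by
    rw [finrank_inf_ker ⊤ (cf Λ m6) (Submodule.mem_top (x := ⟨Q0, hQ0Λ⟩))
      (by simpa using hc6)]
    exact hT
  have hc6q : MvPolynomial.coeff m6 q = 0 := coeff_sq_eq_zero hqsq (by omega)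
  have hqK1 : (⟨q, hqΛ⟩ : ↥Λ) ∈ (⊤ : Submodule ℂ ↥Λ) ⊓ LinearMap.ker (cf Λ m6) :=
    Submodule.mem_inf.mpr ⟨Submodule.mem_top, by simpa using hc6q⟩
  have hK2 : finrank ℂ ↥(((⊤ : Submodule ℂ ↥Λ) ⊓ LinearMap.ker (cf Λ m6))
      ⊓ LinearMap.ker (cf Λ m4)) + 1 = 1 + 1 := by
    rw [finrank_inf_ker _ (cf Λ m4) hqK1 (by simpa using hc4)]; omega
  obtain ⟨x3, hx3K, hx3⟩ := ne_bot_of_finrank_succ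
    (K := ((⊤ : Submodule ℂ ↥Λ) ⊓ LinearMap.ker (cf Λ m6)) ⊓ LinearMap.ker (cf Λ m4))
    (n := 0) (by omega)
  have hx3m := Submodule.mem_inf.mp hx3K
  have hx36 : MvPolynomial.coeff m6 (x3 : Quin) = 0 := by
    have := (Submodule.mem_inf.mp hx3m.1).2
    simpa using this
  have hx34 : MvPolynomial.coeff m4 (x3 : Quin) = 0 := by
    have := hx3m.2
    simpa using this
  have hx3q : (x3 : Quin) ≠ 0 := fun h => hx3 (by exact_mod_cast Subtype.ext h)
  have h1 : ∃ m, QuadMon m ∧ 1 ≤ m 0 + m 1 ∧ MvPolynomial.coeff m (x3 : Quin) ≠ 0 := by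
    refine exists_high_coeff hhom x3.2 fun hsq => ?_
    have hmem : (x3 : Quin) ∈ Λ ⊓ sqCDE := Submodule.mem_inf.mpr ⟨x3.2, hsq⟩
    obtain ⟨c, hc⟩ := eq_smul_of_finrank_le_one hfin1 (Submodule.mem_inf.mpr ⟨hqΛ, hqsq⟩)
      hq0 hmem
    have : MvPolynomial.coeff m4 (x3 : Quin) = c * MvPolynomial.coeff m4 q := by
      rw [hc, MvPolynomial.coeff_smul, smul_eq_mul]
    rw [hx34] at this
    have hc0 : c = 0 := by
      rcases mul_eq_zero.mp this.symm with h | h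
      · exact h
      · exact absurd h hc4
    rw [hc0, zero_smul] at hc
    exact hx3q hc
  obtain ⟨m3, hqm3, hA3, hc3⟩ := h1
  have hK3 : finrank ℂ ↥((((⊤ : Submodule ℂ ↥Λ) ⊓ LinearMap.ker (cf Λ m6))
      ⊓ LinearMap.ker (cf Λ m4)) ⊓ LinearMap.ker (cf Λ m3)) + 1 = 0 + 1 := by
    rw [finrank_inf_ker _ (cf Λ m3) hx3K (by simpa using hc3)]; omega
  have hbot3 : (((⊤ : Submodule ℂ ↥Λ) ⊓ LinearMap.ker (cf Λ m6))
      ⊓ LinearMap.ker (cf Λ m4)) ⊓ LinearMap.ker (cf Λ m3) = ⊥ :=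
    Submodule.finrank_eq_zero.mp (by omega)
  refine ⟨m6, m4, m3, ?_, ?_, ?_, hqm6, hqm4, hqm3, ?_, ?_⟩
  · rintro rfl; exact hc4 hc6q
  · rintro rfl; exact hc3 hx36
  · rintro rfl; exact hc3 hx34
  · rw [wt_rho2 hqm6, wt_rho2 hqm4, wt_rho2 hqm3]
    have h60 : (m6 0 : ℤ) + m6 1 = 2 := by exact_mod_cast hA6
    have h40 : (m4 0 : ℤ) + m4 1 = 0 := by
      have := hA4; omega
    omega
  · refine bij_triple h3 m6 m4 m3 fun x e1 e2 e3 => ?_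
    have : x ∈ (((⊤ : Submodule ℂ ↥Λ) ⊓ LinearMap.ker (cf Λ m6))
        ⊓ LinearMap.ker (cf Λ m4)) ⊓ LinearMap.ker (cf Λ m3) := by
      refine Submodule.mem_inf.mpr ⟨Submodule.mem_inf.mpr
        ⟨Submodule.mem_inf.mpr ⟨Submodule.mem_top, ?_⟩, ?_⟩, ?_⟩ <;>
        simpa using ‹_›
    rw [hbot3, Submodule.mem_bot] at this
    exact this

end Rho3Aux

end Rho3AuxSec

/-- Characterization of `ρ3`-unstable nets, `ρ3 = (3,3,-2,-2,-2)`: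
either the net contains the line `c = d = e = 0` and an element of the net is singular
along it, or a pencil of the net is singular along this line. -/
theorem rho3_unstable_iff (Λ : Submodule ℂ Quin) (hΛ : IsNet Λ) :
    ¬ SemistableWrt Λ (rho 2) ↔
      ((Λ ≤ idealCDE ∧ Λ ⊓ sqCDE ≠ ⊥) ∨
        2 ≤ Module.finrank ℂ ↥(Λ ⊓ sqCDE)) := by
  obtain ⟨h3, hhom⟩ := hΛ
  haveI : FiniteDimensional ℂ ↥Λ := .of_finrank_pos (by omega)
  haveI : FiniteDimensional ℂ ↥(Λ ⊓ sqCDE) :=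
    Submodule.finiteDimensional_of_le (inf_le_left : Λ ⊓ sqCDE ≤ Λ)
  constructor
  · intro hns
    by_contra hcon
    push_neg at hcon
    obtain ⟨hA, hB⟩ := hcon
    apply hns
    by_cases hbot : Λ ⊓ sqCDE = ⊥
    · exact semistable_of_disjoint ⟨h3, hhom⟩ hbot
    · obtain ⟨q, hq, hq0⟩ := Submodule.ne_bot_iff _ |>.mp hbot
      exact semistable_of_not_le ⟨h3, hhom⟩ (by omega) (fun hle => hbot (hA hle)) hq hq0
  · rintro hcond ⟨m1, m2, m3, h12, h13, h23, hq1, hq2, hq3, hw, hbij⟩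
    have hs1 := quadMon_sum hq1
    have hs2 := quadMon_sum hq2
    have hs3 := quadMon_sum hq3
    rw [wt_rho2 hq1, wt_rho2 hq2, wt_rho2 hq3] at hw
    rcases hcond with ⟨hsub, hne⟩ | h2
    · by_cases hA : m1 0 + m1 1 = 2 ∨ m2 0 + m2 1 = 2 ∨ m3 0 + m3 1 = 2
      · rcases hA with h | h | h
        · obtain ⟨Q, hQ⟩ := hbij.2 ![1, 0, 0]
          have h0 := congrFun hQ 0
          simp only [Matrix.cons_val_zero] at h0
          rw [coeff_ideal_eq_zero (hsub Q.2) (by omega) (by omega) (by omega)] at h0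
          exact absurd h0 (by norm_num)
        · obtain ⟨Q, hQ⟩ := hbij.2 ![0, 1, 0]
          have h0 := congrFun hQ 1
          simp only [Matrix.cons_val_one, Matrix.head_cons] at h0
          rw [coeff_ideal_eq_zero (hsub Q.2) (by omega) (by omega) (by omega)] at h0
          exact absurd h0 (by norm_num)
        · obtain ⟨Q, hQ⟩ := hbij.2 ![0, 0, 1]
          have h0 := congrFun hQ 2
          simp only [Matrix.cons_val_two, Matrix.tail_cons, Matrix.head_cons] at h0
          rw [coeff_ideal_eq_zero (hsub Q.2) (by omega) (by omega) (by omega)] at h0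
          exact absurd h0 (by norm_num)
      · push_neg at hA
        obtain ⟨q, hq, hq0⟩ := Submodule.ne_bot_iff _ |>.mp hne
        obtain ⟨hqΛ, hqsq⟩ := Submodule.mem_inf.mp hq
        exact not_bij_of_kernel hqΛ hq0 (coeff_sq_eq_zero hqsq (by omega))
          (coeff_sq_eq_zero hqsq (by omega)) (coeff_sq_eq_zero hqsq (by omega)) hbij
    · have hx : (1 ≤ m1 0 + m1 1 ∧ 1 ≤ m2 0 + m2 1) ∨
          (1 ≤ m1 0 + m1 1 ∧ 1 ≤ m3 0 + m3 1) ∨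
          (1 ≤ m2 0 + m2 1 ∧ 1 ≤ m3 0 + m3 1) := by omega
      rcases hx with ⟨ha, hb⟩ | ⟨ha, hb⟩ | ⟨ha, hb⟩
      · obtain ⟨q, hqN, hq0, hqc⟩ := exists_ker_elt h2 m3
        obtain ⟨hqΛ, hqsq⟩ := Submodule.mem_inf.mp hqN
        exact not_bij_of_kernel hqΛ hq0 (coeff_sq_eq_zero hqsq (by omega))
          (coeff_sq_eq_zero hqsq (by omega)) hqc hbij
      · obtain ⟨q, hqN, hq0, hqc⟩ := exists_ker_elt h2 m2
        obtain ⟨hqΛ, hqsq⟩ := Submodule.mem_inf.mp hqN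
        exact not_bij_of_kernel hqΛ hq0 (coeff_sq_eq_zero hqsq (by omega))
          hqc (coeff_sq_eq_zero hqsq (by omega)) hbij
      · obtain ⟨q, hqN, hq0, hqc⟩ := exists_ker_elt h2 m1
        obtain ⟨hqΛ, hqsq⟩ := Submodule.mem_inf.mp hqN
        exact not_bij_of_kernel hqΛ hq0 hqc (coeff_sq_eq_zero hqsq (by omega))
          (coeff_sq_eq_zero hqsq (by omega)) hbij
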